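/- Let φ: E → F be a continuous positive linear map between normed lattices E and F, and suppose that every order interval [0,x]_E (x ∈ E⁺) is compact in the weak topology of E. If φ is almost interval preserving, then φ is interval preserving. -/

import Mathlib

open Set

/-- If `φ : E → F` is a continuous positive linear map between normed
lattices, order intervals in `E` are weakly compact, and `φ` is almost interval
preserving, then `φ` is interval preserving. -/
theorem almostIntervalPreserving_of_weaklyCompact_intervals_is_intervalPreserving
    {E F : Type*}
    [NormedAddCommGroup E] [Lattice E] [HasSolidNorm E] [IsOrderedAddMonoid E] [NormedSpace ℝ E]
    [NormedAddCommGroup F] [Lattice F] [HasSolidNorm F] [IsOrderedAddMonoid F] [NormedSpace ℝ F]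
    (φ : E →L[ℝ] F)
    (hpos : ∀ x : E, 0 ≤ x → 0 ≤ φ x)
    (hwc : ∀ x : E, 0 ≤ x → IsCompact (toWeakSpace ℝ E '' Icc 0 x))
    (haip : ∀ x : E, 0 ≤ x → Icc (0 : F) (φ x) = closure (φ '' Icc 0 x)) :
    ∀ x : E, 0 ≤ x → φ '' Icc 0 x = Icc 0 (φ x) := by
  intro x hx
  have hT2 : T2Space (WeakSpace ℝ F) := by
    have hinj : Function.Injective ((topDualPairing ℝ F).flip) :=
      separatingDual_iff_injective.mp inferInstance
    exact (WeakBilin.isEmbedding hinj).t2Space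
  have hcomp : IsCompact (toWeakSpace ℝ F '' (φ '' Icc 0 x)) := by
    have h := (hwc x hx).image (WeakSpace.map φ).continuous
    convert h using 1
    rw [Set.image_image, Set.image_image]
    rfl
  have hclosed : IsClosed (toWeakSpace ℝ F '' (φ '' Icc 0 x)) := hcomp.isClosed
  have hpre : (φ '' Icc 0 x) = (toWeakSpaceCLM ℝ F) ⁻¹' (toWeakSpace ℝ F '' (φ '' Icc 0 x)) := by
    ext y
    simp only [Set.mem_preimage]
    constructor
    · intro hy; exact ⟨y, hy, rfl⟩
    · rintro ⟨z, hz, hzy⟩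
      have : z = y := (toWeakSpace ℝ F).injective hzy
      rwa [← this]
  have hSclosed : IsClosed (φ '' Icc 0 x) := by
    rw [hpre]
    exact hclosed.preimage (toWeakSpaceCLM ℝ F).continuous
  rw [haip x hx, hSclosed.closure_eq]
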